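/- For real z with 0 ≤ z < 1: ∏_{k=1}^∞ (1 + z^k)^{φ(k)/k} = exp(z/(1-z^2)). Equivalently, ∑_{k=1}^∞ (φ(k)/k) · log(1 + z^k) = z/(1-z^2). -/

import Mathlib

open Real

-- fiber sum lemma
lemma fiber_sum {z : ℝ} (g : ℕ × ℕ → ℝ)
    (hg : g = fun p : ℕ × ℕ => (Nat.totient p.1 : ℝ) / (p.1 * p.2) * z ^ (p.1 * p.2))
    (n : ℕ) (hn : n ≠ 0) :
    ∑ p ∈ n.divisorsAntidiagonal, g p = z ^ n := by
  have : ∀ p ∈ n.divisorsAntidiagonal, g p = (Nat.totient p.1 : ℝ) * (z ^ n / n) := by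
    intro p hp
    have h := (Nat.mem_divisorsAntidiagonal.mp hp).1
    subst hg
    simp only
    have h' : ((p.1 : ℝ) * p.2) = (n : ℝ) := by exact_mod_cast h
    rw [h, h']
    ring
  rw [Finset.sum_congr rfl this, ← Finset.sum_mul]
  rw [Nat.sum_divisorsAntidiagonal (f := fun d _ => (Nat.totient d : ℝ))]
  rw [← Nat.cast_sum, Nat.sum_totient]
  have : (n : ℝ) ≠ 0 := Nat.cast_ne_zero.mpr hn
  field_simp

lemma g_summable {z : ℝ} (hz0 : 0 < z) (hz1 : z < 1) :
    Summable (fun p : ℕ × ℕ => (Nat.totient p.1 : ℝ) / (p.1 * p.2) * z ^ (p.1 * p.2)) := by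
  have hznn : (0:ℝ) ≤ z := hz0.le
  have hM : Summable (fun p : ℕ × ℕ => z ^ p.1 * z ^ p.2 / z) := by
    have h := summable_geometric_of_lt_one hznn hz1
    exact (h.mul_of_nonneg h (fun n => by positivity) (fun n => by positivity)).div_const z
  refine Summable.of_nonneg_of_le (fun p => by positivity) (fun p => ?_) hM
  rcases Nat.eq_zero_or_pos p.1 with h1 | h1
  · simp [h1]
    positivity
  rcases Nat.eq_zero_or_pos p.2 with h2 | h2
  · simp [h2]
    positivity
  rw [le_div_iff₀ hz0]
  have hb1 : (Nat.totient p.1 : ℝ) / (p.1 * p.2) ≤ 1 := by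
    rw [div_le_one (by positivity)]
    calc (Nat.totient p.1 : ℝ) ≤ p.1 := by exact_mod_cast Nat.totient_le p.1
    _ ≤ (p.1 : ℝ) * p.2 := le_mul_of_one_le_right (by positivity) (Nat.one_le_cast.mpr h2)
  calc (Nat.totient p.1 : ℝ) / (p.1 * p.2) * z ^ (p.1 * p.2) * z
      ≤ 1 * z ^ (p.1 * p.2) * z := by gcongr
    _ = z ^ (p.1 * p.2 + 1) := by ring
    _ ≤ z ^ (p.1 + p.2) := by
        apply pow_le_pow_of_le_one hznn hz1.le
        nlinarith [h1, h2]
    _ = z ^ p.1 * z ^ p.2 := (pow_add z _ _)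

lemma g_hasSum {z : ℝ} (hz0 : 0 < z) (hz1 : z < 1) :
    HasSum (fun p : ℕ × ℕ => (Nat.totient p.1 : ℝ) / (p.1 * p.2) * z ^ (p.1 * p.2))
      (z / (1 - z)) := by
  set g : ℕ × ℕ → ℝ := fun p => (Nat.totient p.1 : ℝ) / (p.1 * p.2) * z ^ (p.1 * p.2) with hgdef
  have hgsum : Summable g := g_summable hz0 hz1
  have hfib := hgsum.hasSum.tsum_fiberwise (fun p => p.1 * p.2)
  -- identify the fiberwise sums
  have hval : (fun n : ℕ => ∑' (b : (fun p : ℕ × ℕ => p.1 * p.2) ⁻¹' {n}), g b)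
      = fun n : ℕ => z ^ n - (if n = 0 then 1 else 0) := by
    funext n
    rcases eq_or_ne n 0 with rfl | hn
    · have : ∀ b : (fun p : ℕ × ℕ => p.1 * p.2) ⁻¹' {0}, g b = 0 := by
        rintro ⟨⟨p1, p2⟩, hp⟩
        have : p1 * p2 = 0 := hp
        rcases Nat.mul_eq_zero.mp this with rfl | rfl
        · simp [hgdef]
        · simp [hgdef]
      simp [this, tsum_zero]
    · rw [show (fun p : ℕ × ℕ => p.1 * p.2) ⁻¹' {n} = (n.divisorsAntidiagonal : Set (ℕ × ℕ)) by
        ext p; simp [Nat.mem_divisorsAntidiagonal, hn],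
        Finset.tsum_subtype' n.divisorsAntidiagonal g, fiber_sum g hgdef n hn]
      simp [hn]
  rw [hval] at hfib
  have hgeo : HasSum (fun n : ℕ => z ^ n - (if n = 0 then 1 else 0)) ((1 - z)⁻¹ - 1) :=
    (hasSum_geometric_of_lt_one hz0.le hz1).sub (hasSum_ite_eq 0 1)
  have hS : ∑' (b : ℕ × ℕ), g b = z / (1 - z) := by
    rw [hfib.unique hgeo]
    have h1z : (1 : ℝ) - z ≠ 0 := by linarith
    field_simp
    ring
  exact hS ▸ hgsum.hasSum

lemma keyC {z : ℝ} (hz0 : 0 ≤ z) (hz1 : z < 1) :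
    HasSum (fun k : ℕ => (Nat.totient k : ℝ) / k * (-Real.log (1 - z ^ k)))
      (z / (1 - z)) := by
  rcases eq_or_lt_of_le hz0 with rfl | hz0'
  · have : (fun k : ℕ => (Nat.totient k : ℝ) / k * (-Real.log (1 - (0:ℝ) ^ k))) = fun _ => 0 := by
      funext k
      rcases Nat.eq_zero_or_pos k with rfl | hk
      · simp
      · rw [zero_pow hk.ne']
        simp
    rw [this]
    simpa using hasSum_zero
  have hfib : ∀ k : ℕ, HasSum (fun n : ℕ =>
      (Nat.totient k : ℝ) / (k * n) * z ^ (k * n))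
      ((Nat.totient k : ℝ) / k * (-Real.log (1 - z ^ k))) := by
    intro k
    rcases Nat.eq_zero_or_pos k with rfl | hk
    · simpa using hasSum_zero
    · have hxk : |z ^ k| < 1 := by
        rw [abs_of_nonneg (by positivity)]
        exact pow_lt_one₀ hz0 hz1 hk.ne'
      have h1 := (hasSum_pow_div_log_of_abs_lt_one hxk).mul_left ((Nat.totient k : ℝ) / k)
      have heq : (fun n : ℕ => (Nat.totient k : ℝ) / k * ((z ^ k) ^ (n + 1) / (n + 1)))
          = fun n : ℕ => (Nat.totient k : ℝ) / (k * (n + 1)) * z ^ (k * (n + 1)) := by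
        funext n
        rw [pow_mul]
        push_cast
        rw [div_mul_eq_mul_div, div_mul_eq_mul_div, mul_div_assoc, div_div, mul_comm ((n:ℝ)+1), mul_div_assoc]
      rw [heq] at h1
      refine (hasSum_nat_add_iff' (f := fun n : ℕ =>
        (Nat.totient k : ℝ) / (k * n) * z ^ (k * n))
        (g := (Nat.totient k : ℝ) / k * (-Real.log (1 - z ^ k))) 1).mp ?_
      have h0 : ∑ i ∈ Finset.range 1,
          (Nat.totient k : ℝ) / (k * i) * z ^ (k * i) = 0 := by simp
      rw [h0, sub_zero]
      convert h1 using 2 with n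
      · rfl
      push_cast
      ring
  exact (g_hasSum hz0' hz1).prod_fiberwise hfib

lemma main_hasSum {z : ℝ} (hz0 : 0 ≤ z) (hz1 : z < 1) :
    HasSum (fun k : ℕ+ => (Nat.totient (k : ℕ) : ℝ) / (k : ℝ) * Real.log (1 + z ^ (k : ℕ)))
      (z / (1 - z ^ 2)) := by
  have hz2 : z ^ 2 < 1 := by nlinarith
  have A := keyC hz0 hz1
  have B := keyC (z := z ^ 2) (by positivity) hz2
  have C := A.sub B
  have heq : (fun k : ℕ => (Nat.totient k : ℝ) / k * (-Real.log (1 - z ^ k))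
      - (Nat.totient k : ℝ) / k * (-Real.log (1 - (z ^ 2) ^ k)))
      = fun k : ℕ => (Nat.totient k : ℝ) / k * Real.log (1 + z ^ k) := by
    funext k
    rcases Nat.eq_zero_or_pos k with rfl | hk
    · simp
    · have hzk : z ^ k < 1 := by
        rcases eq_or_lt_of_le hz0 with rfl | hz0'
        · rw [zero_pow hk.ne']; norm_num
        · exact pow_lt_one₀ hz0 hz1 hk.ne'
      have h1 : (1 : ℝ) - z ^ k ≠ 0 := by
        have : 0 < 1 - z ^ k := by linarith
        linarith
      have h2 : (1 : ℝ) + z ^ k ≠ 0 := by positivity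
      have hfac : 1 - (z ^ 2) ^ k = (1 - z ^ k) * (1 + z ^ k) := by
        rw [← pow_mul, mul_comm 2 k, pow_mul]; ring
      rw [hfac, Real.log_mul h1 h2]
      ring
  rw [heq] at C
  have hval : z / (1 - z) - z ^ 2 / (1 - z ^ 2) = z / (1 - z ^ 2) := by
    have h1 : (1 : ℝ) - z ≠ 0 := by linarith
    have h2 : (1 : ℝ) - z ^ 2 ≠ 0 := by nlinarith
    field_simp
    ring
  rw [hval] at C
  have hinj : Function.Injective ((↑·) : ℕ+ → ℕ) := fun a b h => PNat.coe_injective h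
  refine (Function.Injective.hasSum_iff hinj ?_).mpr C
  intro x hx
  have hx0 : x = 0 := by
    by_contra h
    exact hx ⟨⟨x, Nat.pos_of_ne_zero h⟩, rfl⟩
  subst hx0
  simp

theorem stmt_8 (z : ℝ) (hz0 : 0 ≤ z) (hz1 : z < 1) :
    (∏' k : ℕ+, (1 + z ^ (k : ℕ)) ^ ((Nat.totient (k : ℕ) : ℝ) / (k : ℝ)) =
      Real.exp (z / (1 - z ^ 2))) ∧
    (∑' k : ℕ+, (Nat.totient (k : ℕ) : ℝ) / (k : ℝ) * Real.log (1 + z ^ (k : ℕ)) =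
      z / (1 - z ^ 2)) := by
  have hS := main_hasSum hz0 hz1
  constructor
  · have hP := hS.rexp
    have heq : (Real.exp ∘ fun k : ℕ+ =>
        (Nat.totient (k : ℕ) : ℝ) / (k : ℝ) * Real.log (1 + z ^ (k : ℕ)))
        = fun k : ℕ+ => (1 + z ^ (k : ℕ)) ^ ((Nat.totient (k : ℕ) : ℝ) / (k : ℝ)) := by
      funext k
      have hpos : (0 : ℝ) < 1 + z ^ (k : ℕ) := by positivity
      rw [Real.rpow_def_of_pos hpos]
      simp [mul_comm]
    rw [heq] at hP
    exact hP.tprod_eq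
  · exact hS.tsum_eq
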